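/- Let ξ : ℝ³ → ℝ be twice continuously differentiable with D²ξ(x)[ζ,ζ] ≥ c|ζ|² for some c > 0 and all x, ζ ∈ ℝ³. Let v ∈ ℝ³ be nonzero, t_b > 0, and suppose ξ(x) = 0 = ξ(x − t_b v). For s ∈ [0, t_b] set X(s) := x − (t_b − s)v and Φ(s) := (∇ξ(X(s))·v)² + |v|² ξ(X(s)). Then: (a) there is a unique s* ∈ (0, t_b) with ∇ξ(X(s*))·v = 0, and ∇ξ(X(s))·v < 0 for s ∈ [0, s*) while ∇ξ(X(s))·v > 0 for s ∈ (s*, t_b]; (b) Φ is strictly decreasing on [0, s*] and strictly increasing on [s*, t_b]. -/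

import Mathlib

noncomputable section

open Real

/-- Euclidean 3-space. -/
abbrev E3 : Type := EuclideanSpace ℝ (Fin 3)

/-- Structural monotonicity along a chord of the uniformly convex domain:
with `X(s) = x − (t_b − s) v` and `Φ(s) = (∇ξ(X(s))·v)² + |v|² ξ(X(s))`,
there is a unique interior time `s*` where `∇ξ(X(s*))·v = 0`, the quantity
`∇ξ(X(s))·v` is negative before and positive after, and `Φ` is strictly
decreasing on `[0,s*]` and strictly increasing on `[s*,t_b]`. -/
theorem chord_sign_and_monotonicity
    (ξ : E3 → ℝ) (hξ : ContDiff ℝ 2 ξ)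
    (c : ℝ) (hc : 0 < c)
    (hconv : ∀ x ζ : E3, c * ‖ζ‖ ^ 2 ≤ iteratedFDeriv ℝ 2 ξ x ![ζ, ζ])
    (x v : E3) (hv : v ≠ 0) (tb : ℝ) (htb : 0 < tb)
    (hx : ξ x = 0) (hxb : ξ (x - tb • v) = 0) :
    ∃ sstar ∈ Set.Ioo 0 tb,
      fderiv ℝ ξ (x - (tb - sstar) • v) v = 0 ∧
      (∀ s ∈ Set.Ioo 0 tb, fderiv ℝ ξ (x - (tb - s) • v) v = 0 → s = sstar) ∧
      (∀ s ∈ Set.Ico 0 sstar, fderiv ℝ ξ (x - (tb - s) • v) v < 0) ∧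
      (∀ s ∈ Set.Ioc sstar tb, 0 < fderiv ℝ ξ (x - (tb - s) • v) v) ∧
      StrictAntiOn
        (fun s : ℝ =>
          (fderiv ℝ ξ (x - (tb - s) • v) v) ^ 2 + ‖v‖ ^ 2 * ξ (x - (tb - s) • v))
        (Set.Icc 0 sstar) ∧
      StrictMonoOn
        (fun s : ℝ =>
          (fderiv ℝ ξ (x - (tb - s) • v) v) ^ 2 + ‖v‖ ^ 2 * ξ (x - (tb - s) • v))
        (Set.Icc sstar tb) := by
  set p : E3 := x - tb • v with hp
  have hX : ∀ s : ℝ, x - (tb - s) • v = p + s • v := by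
    intro s; rw [hp, sub_smul]; abel
  set L : ℝ → E3 := fun s => p + s • v with hLdef
  set g : ℝ → ℝ := fun s => ξ (L s) with hg
  set G : ℝ → ℝ := fun s => fderiv ℝ ξ (L s) v with hGdef
  -- derivative facts
  have hL : ∀ s : ℝ, HasDerivAt L v s := fun s => by
    rw [hLdef]; simpa using ((hasDerivAt_id s).smul_const v).const_add p
  have hgd : ∀ s : ℝ, HasDerivAt g (G s) s := fun s =>
    ((hξ.differentiable (by norm_num)).differentiableAt.hasFDerivAt).comp_hasDerivAt s (hL s)
  have hF : ContDiff ℝ 1 (fderiv ℝ ξ) := hξ.fderiv_right (by norm_num)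
  have hGd : ∀ s : ℝ, HasDerivAt G (iteratedFDeriv ℝ 2 ξ (L s) ![v, v]) s := by
    intro s
    have h1 : HasFDerivAt (fun y => fderiv ℝ ξ y v)
        ((ContinuousLinearMap.apply ℝ ℝ v).comp (fderiv ℝ (fderiv ℝ ξ) (L s))) (L s) :=
      (ContinuousLinearMap.apply ℝ ℝ v).hasFDerivAt.comp _
        (hF.differentiable one_ne_zero).differentiableAt.hasFDerivAt
    have := h1.comp_hasDerivAt s (hL s)
    rw [iteratedFDeriv_two_apply]
    simp at this ⊢; exact this
  have hpos : ∀ s : ℝ, 0 < iteratedFDeriv ℝ 2 ξ (L s) ![v, v] := fun s =>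
    lt_of_lt_of_le (mul_pos hc (pow_pos (norm_pos_iff.mpr hv) 2)) (hconv (L s) v)
  have hGmono : StrictMono G := strictMono_of_deriv_pos fun s => by
    rw [(hGd s).deriv]; exact hpos s
  -- Rolle
  have hg0 : g 0 = 0 := by simp [hg, hLdef, hxb]
  have hgtb : g tb = 0 := by
    have : L tb = x := by rw [hLdef, hp]; module
    simp [hg, this, hx]
  obtain ⟨sstar, hsI, hsd⟩ := exists_deriv_eq_zero htb
    (fun s _ => (hgd s).continuousAt.continuousWithinAt) (hg0.trans hgtb.symm)
  have hG0 : G sstar = 0 := by rw [← (hgd sstar).deriv]; exact hsd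
  have hneg : ∀ s ∈ Set.Ico 0 sstar, G s < 0 := fun s hs => by
    have := hGmono hs.2; rwa [hG0] at this
  have hposG : ∀ s ∈ Set.Ioc sstar tb, 0 < G s := fun s hs => by
    have := hGmono hs.1; rwa [hG0] at this
  -- Phi
  set Φ : ℝ → ℝ := fun s => (G s) ^ 2 + ‖v‖ ^ 2 * g s with hΦ
  have hΦd : ∀ s : ℝ,
      HasDerivAt Φ (G s * (2 * iteratedFDeriv ℝ 2 ξ (L s) ![v, v] + ‖v‖ ^ 2)) s := by
    intro s
    have h2 := ((hGd s).fun_pow 2).add ((hgd s).const_mul (‖v‖ ^ 2))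
    refine h2.congr_deriv ?_
    rw [show (2:ℕ) - 1 = 1 from rfl]; push_cast; ring
  have hfac : ∀ s : ℝ, 0 < 2 * iteratedFDeriv ℝ 2 ξ (L s) ![v, v] + ‖v‖ ^ 2 := fun s => by
    have := hpos s; positivity
  have hΦcont : Continuous Φ :=
    continuous_iff_continuousAt.2 fun s => (hΦd s).continuousAt
  have hanti : StrictAntiOn Φ (Set.Icc 0 sstar) :=
    strictAntiOn_of_deriv_neg (convex_Icc _ _) hΦcont.continuousOn fun s hs => by
      rw [(hΦd s).deriv]
      rw [interior_Icc] at hs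
      exact mul_neg_of_neg_of_pos (hneg s ⟨le_of_lt hs.1, hs.2⟩) (hfac s)
  have hmonoΦ : StrictMonoOn Φ (Set.Icc sstar tb) :=
    strictMonoOn_of_deriv_pos (convex_Icc _ _) hΦcont.continuousOn fun s hs => by
      rw [(hΦd s).deriv]
      rw [interior_Icc] at hs
      exact mul_pos (hposG s ⟨hs.1, le_of_lt hs.2⟩) (hfac s)
  have hfun : (fun s : ℝ =>
      (fderiv ℝ ξ (x - (tb - s) • v) v) ^ 2 + ‖v‖ ^ 2 * ξ (x - (tb - s) • v)) = Φ := by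
    funext s
    simp only [hΦ, hGdef, hg, hX s]
    rfl
  refine ⟨sstar, hsI, ?_, ?_, ?_, ?_, ?_, ?_⟩
  · rw [hX]; exact hG0
  · intro s _ hs0
    rw [hX] at hs0
    exact hGmono.injective (hs0.trans hG0.symm)
  · intro s hs; rw [hX]; exact hneg s hs
  · intro s hs; rw [hX]; exact hposG s hs
  · rw [hfun]; exact hanti
  · rw [hfun]; exact hmonoΦ
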